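/- In the setting of the Sequential Update Lemma, for indices i ≤ j ≤ k, the i-th column of X⁽ʲ⁾ equals the i-th column of X⁽ᵏ⁾; that is, once column i has been processed, it never changes again. -/

import Mathlib

open Matrix

/-- In the sequential-update process, once column `c` has been processed
(i.e. after step `c+1`, in 0-based indexing), it never changes again:
for steps `j, k` with `c + 1 ≤ j ≤ k ≤ n`, column `c` of `X⁽ʲ⁾` equals
column `c` of `X⁽ᵏ⁾`. -/
theorem sequential_update_column_stable {F : Type*} [Field F] {n : ℕ}
    (X Y : Matrix (Fin n) (Fin n) F)
    (hY : ∀ i j : Fin n, j ≤ i → Y i j = 0)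
    (Xs : ℕ → Matrix (Fin n) (Fin n) F)
    (h0 : Xs 0 = X)
    (hstep : ∀ i : Fin n, Xs ((i : ℕ) + 1) =
      Xs (i : ℕ) + Matrix.vecMulVec (fun k => Xs (i : ℕ) k i) (fun l => Y i l))
    (c : Fin n) (j k : ℕ) (hcj : (c : ℕ) + 1 ≤ j) (hjk : j ≤ k) (hkn : k ≤ n) :
    ∀ row : Fin n, Xs j row c = Xs k row c := by
  induction k, hjk using Nat.le_induction with
  | base => intro row; rfl
  | succ m hm ih =>
    intro row
    have hmn : m < n := lt_of_lt_of_le (Nat.lt_succ_self m) hkn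
    have ih' := ih (le_trans (Nat.le_succ m) hkn)
    set i : Fin n := ⟨m, hmn⟩ with hi
    have hs := hstep i
    simp only [hi] at hs
    rw [ih' row, hs]
    have hci : c ≤ i := by
      have : (c : ℕ) < m := lt_of_lt_of_le (Nat.lt_succ_self c) (le_trans hcj hm)
      exact le_of_lt this
    simp [Matrix.vecMulVec_apply, hY i c hci]
    exact Or.inr (hY i c hci)
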